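/- Let (X, Y) be a complete coresolving cotorsion pair in an abelian category A and set ω := X ∩ Y. Then for every object A of A one has: A ∈ Y if and only if every morphism f : X → A with X ∈ X factors through some object of ω. -/

import Mathlib

open CategoryTheory CategoryTheory.Limits CategoryTheory.Abelian

universe w v u

variable {C : Type u} [Category.{v} C] [Abelian C]

/-- `f : X ⟶ Y` and `g : Y ⟶ Z` form a short exact sequence `0 → X → Y → Z → 0`. -/
def IsShortExactSeq {X Y Z : C} (f : X ⟶ Y) (g : Y ⟶ Z) : Prop :=
  ∃ zero : f ≫ g = 0, (ShortComplex.mk f g zero).ShortExact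

/-- `(D, E)` is a cotorsion pair: each class is the `Ext¹`-orthogonal of the other. -/
def IsCotorsionPair [HasExt.{w} C] (D E : Set C) : Prop :=
  (∀ X : C, X ∈ D ↔ ∀ Y ∈ E, Subsingleton (Ext.{w} X Y 1)) ∧
  (∀ Y : C, Y ∈ E ↔ ∀ X ∈ D, Subsingleton (Ext.{w} X Y 1))

/-- `(D, E)` is a complete cotorsion pair. -/
def IsCompleteCotorsionPair [HasExt.{w} C] (D E : Set C) : Prop :=
  IsCotorsionPair.{w} D E ∧
  (∀ Z : C, ∃ (X Y : C) (f : Y ⟶ X) (g : X ⟶ Z), IsShortExactSeq f g ∧ X ∈ D ∧ Y ∈ E) ∧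
  (∀ Z : C, ∃ (Y X : C) (f : Z ⟶ Y) (g : Y ⟶ X), IsShortExactSeq f g ∧ Y ∈ E ∧ X ∈ D)

/-- A cotorsion pair `(D, E)` is coresolving if `E` is closed under cokernels of
monomorphisms. -/
def IsCoresolving (E : Set C) : Prop :=
  ∀ ⦃E₁ E₂ Z : C⦄ (f : E₁ ⟶ E₂) (g : E₂ ⟶ Z),
    IsShortExactSeq f g → E₁ ∈ E → E₂ ∈ E → Z ∈ E

/-- A morphism factors through some object of the class `ω`. -/
def FactorsThroughClass (ω : Set C) {A B : C} (f : A ⟶ B) : Prop :=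
  ∃ (I : C) (u : A ⟶ I) (v : I ⟶ B), I ∈ ω ∧ u ≫ v = f

namespace StmtAux

universe w'

/-- The homology in degree 0 of the single complex gives back the object. -/
noncomputable def η [HasDerivedCategory.{w'} C] :
    DerivedCategory.singleFunctor C 0 ⋙ DerivedCategory.homologyFunctor C 0 ≅ 𝟭 C :=
  Functor.isoWhiskerRight ((SingleFunctors.evaluation C (DerivedCategory C) (0 : ℤ)).mapIso
      (DerivedCategory.singleFunctorsPostcompQIso C)) (DerivedCategory.homologyFunctor C 0) ≪≫
    Functor.associator _ _ _ ≪≫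
    Functor.isoWhiskerLeft (CochainComplex.singleFunctor C 0)
      (DerivedCategory.homologyFunctorFactors C 0) ≪≫
    HomologicalComplex.homologyFunctorSingleIso C (ComplexShape.up ℤ) 0

variable [HasExt.{w} C]

/-- A degree-zero `Ext` element, seen as a morphism between single complexes. -/
noncomputable def unshift [HasDerivedCategory.{w'} C] {P Q : C} (x : Ext.{w} P Q 0) :
    (DerivedCategory.singleFunctor C 0).obj P ⟶ (DerivedCategory.singleFunctor C 0).obj Q :=
  (ShiftedHom.homEquiv ((0 : ℕ) : ℤ) (by simp)).symm x.hom

lemma unshift_mk₀ [HasDerivedCategory.{w'} C] {P Q : C} (g : P ⟶ Q) :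
    unshift (Ext.mk₀ g) = (DerivedCategory.singleFunctor C 0).map g := by
  rw [unshift, Ext.mk₀_hom, ← ShiftedHom.homEquiv_apply, Equiv.symm_apply_apply]

lemma unshift_comp [HasDerivedCategory.{w'} C] {P Q R : C} (f : P ⟶ Q) (x : Ext.{w} Q R 0) :
    unshift ((Ext.mk₀ f).comp x (zero_add 0)) =
      (DerivedCategory.singleFunctor C 0).map f ≫ unshift x := by
  rw [unshift, unshift, ← Ext.singleFunctor_map_comp_hom]
  simp [ShiftedHom.homEquiv]

/-- A degree-zero `Ext` element gives a morphism, by taking homology. -/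
noncomputable def rho [HasDerivedCategory.{w'} C] {P Q : C} (x : Ext.{w} P Q 0) : P ⟶ Q :=
  (η (C := C)).inv.app P ≫ (DerivedCategory.homologyFunctor C 0).map (unshift x) ≫
    (η (C := C)).hom.app Q

lemma rho_mk₀ [HasDerivedCategory.{w'} C] {P Q : C} (g : P ⟶ Q) : rho (Ext.mk₀ g) = g := by
  rw [rho, unshift_mk₀]
  have h := (η (C := C)).hom.naturality g
  dsimp at h ⊢
  rw [h]
  simp

lemma rho_comp [HasDerivedCategory.{w'} C] {P Q R : C} (f : P ⟶ Q) (x : Ext.{w} Q R 0) :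
    rho ((Ext.mk₀ f).comp x (zero_add 0)) = f ≫ rho x := by
  rw [rho, unshift_comp, Functor.map_comp, rho]
  have h := (η (C := C)).inv.naturality f
  dsimp at h ⊢
  slice_lhs 1 2 => rw [← h]
  simp

/-- The key lifting lemma: a map out of the kernel of a short exact sequence extends to
the middle object provided the relevant `Ext¹` group vanishes. -/
lemma exists_lift {X₀ Y₀ X₁ A : C} {k : X₀ ⟶ Y₀} {q : Y₀ ⟶ X₁} {w : k ≫ q = 0}
    (hS : (ShortComplex.mk k q w).ShortExact) (φ : X₀ ⟶ A)
    (h1 : Subsingleton (Ext.{w} X₁ A 1)) : ∃ ψ : Y₀ ⟶ A, k ≫ ψ = φ := by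
  haveI := h1
  obtain ⟨x₂, hx₂⟩ := Ext.contravariant_sequence_exact₁ hS A (Ext.mk₀ φ) rfl
    (Subsingleton.elim _ _)
  letI := HasDerivedCategory.standard C
  refine ⟨rho x₂, ?_⟩
  have h := rho_comp (C := C) k x₂
  rw [hx₂, rho_mk₀] at h
  exact h.symm

lemma subsingleton_ext_of_retract {K P : C} (D : C) (j : K ⟶ P) (r : P ⟶ K)
    (hjr : j ≫ r = 𝟙 K) (h : Subsingleton (Ext.{w} D P 1)) :
    Subsingleton (Ext.{w} D K 1) := by
  constructor
  intro x y
  have hx : ∀ z : Ext.{w} D K 1,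
      (z.comp (Ext.mk₀ j) (add_zero 1)).comp (Ext.mk₀ r) (add_zero 1) = z := by
    intro z
    rw [Ext.comp_assoc_of_third_deg_zero, Ext.mk₀_comp_mk₀, hjr, Ext.comp_mk₀_id]
  rw [← hx x, ← hx y,
    h.elim (x.comp (Ext.mk₀ j) (add_zero 1)) (y.comp (Ext.mk₀ j) (add_zero 1))]

lemma subsingleton_ext_middle_cov {S : ShortComplex C} (hS : S.ShortExact) (D : C)
    (h₁ : Subsingleton (Ext.{w} D S.X₁ 1)) (h₃ : Subsingleton (Ext.{w} D S.X₃ 1)) :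
    Subsingleton (Ext.{w} D S.X₂ 1) := by
  constructor
  intro x y
  obtain ⟨x₁, hx₁⟩ := Ext.covariant_sequence_exact₂ D hS x (h₃.elim _ _)
  obtain ⟨y₁, hy₁⟩ := Ext.covariant_sequence_exact₂ D hS y (h₃.elim _ _)
  rw [← hx₁, ← hy₁, h₁.elim x₁ y₁]

lemma subsingleton_ext_middle_contra {S : ShortComplex C} (hS : S.ShortExact) (E : C)
    (h₁ : Subsingleton (Ext.{w} S.X₁ E 1)) (h₃ : Subsingleton (Ext.{w} S.X₃ E 1)) :
    Subsingleton (Ext.{w} S.X₂ E 1) := by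
  constructor
  intro x y
  obtain ⟨x₁, hx₁⟩ := Ext.contravariant_sequence_exact₂ hS E x (h₁.elim _ _)
  obtain ⟨y₁, hy₁⟩ := Ext.contravariant_sequence_exact₂ hS E y (h₁.elim _ _)
  rw [← hx₁, ← hy₁, h₃.elim x₁ y₁]

end StmtAux

/-- Let `(X, Y)` be a complete coresolving cotorsion pair and
`ω := X ∩ Y`. Then `A ∈ Y` iff every morphism `X ⟶ A` with `X ∈ X` factors through `ω`. -/
theorem stmt3 [HasExt.{w} C] (X Y : Set C)
    (hpair : IsCompleteCotorsionPair.{w} X Y) (hcores : IsCoresolving Y) (A : C) :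
    A ∈ Y ↔ ∀ (X' : C), X' ∈ X → ∀ f : X' ⟶ A, FactorsThroughClass (X ∩ Y) f := by
  constructor
  · -- forward direction
    intro hA X' hX' f
    obtain ⟨Y₀, X₁, k, q, ⟨w, hS⟩, hY₀, hX₁⟩ := hpair.2.2 X'
    have hY₀X : Y₀ ∈ X := by
      rw [hpair.1.1]
      intro E hE
      exact StmtAux.subsingleton_ext_middle_contra hS E
        ((hpair.1.1 X').1 hX' E hE) ((hpair.1.1 X₁).1 hX₁ E hE)
    have h1 : Subsingleton (Ext.{w} X₁ A 1) := (hpair.1.1 X₁).1 hX₁ A hA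
    obtain ⟨ψ, hψ⟩ := StmtAux.exists_lift hS f h1
    exact ⟨Y₀, k, ψ, ⟨hY₀X, hY₀⟩, hψ⟩
  · -- backward direction
    intro hfac
    obtain ⟨X', Y', k, g, ⟨w₁, hS₁⟩, hX', hY'⟩ := hpair.2.1 A
    obtain ⟨W, u, v, ⟨hWX, hWY⟩, huv⟩ := hfac X' hX' g
    haveI : Epi g := hS₁.epi_g
    haveI : Mono k := hS₁.mono_f
    haveI hepi_v : Epi v := by
      haveI : Epi (u ≫ v) := by rw [huv]; infer_instance
      exact epi_of_epi u v
    -- the kernel of `v`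
    set K := kernel v with hK
    set ι : K ⟶ W := kernel.ι v with hι
    have hιv : ι ≫ v = 0 := kernel.condition v
    have hS₂ : (ShortComplex.mk ι v hιv).ShortExact := by
      haveI : Mono ι := inferInstance
      exact ⟨(ShortComplex.mk ι v hιv).exact_of_f_is_kernel (kernelIsKernel v)⟩
    -- the pullback of `g` and `v`
    set P := pullback g v with hP
    set p₁ : P ⟶ X' := pullback.fst g v with hp₁
    set p₂ : P ⟶ W := pullback.snd g v with hp₂
    have hcond : p₁ ≫ g = p₂ ≫ v := pullback.condition
    -- the short exact sequence `0 → Y' → P → W → 0`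
    have hkg : k ≫ g = (0 : Y' ⟶ W) ≫ v := by rw [w₁, zero_comp]
    set j : Y' ⟶ P := pullback.lift k 0 hkg with hj
    have hjp₁ : j ≫ p₁ = k := pullback.lift_fst _ _ _
    have hjp₂ : j ≫ p₂ = 0 := pullback.lift_snd _ _ _
    haveI : Mono j := by
      have : Mono (j ≫ p₁) := by rw [hjp₁]; infer_instance
      exact mono_of_mono j p₁
    have hjlim : IsLimit (KernelFork.ofι j hjp₂) := by
      refine KernelFork.IsLimit.ofι' j hjp₂ (fun {T} t ht => ?_)
      have htg : (t ≫ p₁) ≫ g = 0 := by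
        rw [Category.assoc, hcond, ← Category.assoc, ht, zero_comp]
      refine ⟨hS₁.exact.lift (t ≫ p₁) htg, ?_⟩
      apply pullback.hom_ext
      · rw [Category.assoc, hjp₁]
        simpa using hS₁.exact.lift_f (t ≫ p₁) htg
      · rw [Category.assoc, hjp₂, comp_zero, ht]
    haveI : Epi p₂ := by rw [hp₂]; infer_instance
    have hS₃ : (ShortComplex.mk j p₂ hjp₂).ShortExact :=
      ⟨(ShortComplex.mk j p₂ hjp₂).exact_of_f_is_kernel hjlim⟩
    -- `P` has trivial `Ext¹(D, ·)` for `D ∈ X`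
    have hPY : ∀ D ∈ X, Subsingleton (Ext.{w} D P 1) := fun D hD =>
      StmtAux.subsingleton_ext_middle_cov hS₃ D
        ((hpair.1.2 Y').1 hY' D hD) ((hpair.1.2 W).1 hWY D hD)
    -- `K` is a retract of `P`
    have h0ι : (0 : K ⟶ X') ≫ g = ι ≫ v := by rw [hιv, zero_comp]
    set j' : K ⟶ P := pullback.lift 0 ι h0ι with hj'
    have hj'p₁ : j' ≫ p₁ = 0 := pullback.lift_fst _ _ _
    have hj'p₂ : j' ≫ p₂ = ι := pullback.lift_snd _ _ _
    have hmv : (p₂ - p₁ ≫ u) ≫ v = 0 := by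
      rw [Preadditive.sub_comp, Category.assoc, huv, hcond, sub_self]
    set r : P ⟶ K := kernel.lift v (p₂ - p₁ ≫ u) hmv with hr
    have hrι : r ≫ ι = p₂ - p₁ ≫ u := kernel.lift_ι _ _ _
    have hj'r : j' ≫ r = 𝟙 K := by
      haveI : Mono ι := inferInstance
      rw [← cancel_mono ι, Category.assoc, hrι, Category.id_comp,
        Preadditive.comp_sub, hj'p₂, ← Category.assoc, hj'p₁, zero_comp, sub_zero]
    -- hence `K ∈ Y`
    have hKY : K ∈ Y := by
      rw [hpair.1.2]
      intro D hD
      exact StmtAux.subsingleton_ext_of_retract D j' r hj'r (hPY D hD)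
    -- conclude by coresolvingness
    exact hcores ι v ⟨hιv, hS₂⟩ hKY hWY
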